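/- The Jordan algebra J₅ = J(V, f₃) (with f₃ the positive definite form: e₂² = e₃² = e₁, e₂·e₃ = 0, e₁ unit) degenerates to J₁₉: for t ≠ 0, setting A_t = (1/2)(e₁−e₂), B_t = t·e₃, C_t = (t²/2)(e₁+e₂), one has A_t² = A_t, A_t·B_t = (1/2)B_t, B_t² = C_t + t²A_t, B_t·C_t = (t²/2)B_t, C_t² = t²C_t, A_t·C_t = 0, so as t → 0 the structure constants converge to those of J₁₉: e² = e, n₁² = n₂, e·n₁ = (1/2)n₁, all other products zero. -/

import Mathlib

/-- Multiplication of J₅ = J(V,f₃) on ℝ³: e₁ = (1,0,0) is the unit,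
e₂² = e₃² = e₁, e₂·e₃ = 0. -/
def mulJ5 (x y : ℝ × ℝ × ℝ) : ℝ × ℝ × ℝ :=
  (x.1 * y.1 + x.2.1 * y.2.1 + x.2.2 * y.2.2,
   x.1 * y.2.1 + x.2.1 * y.1, x.1 * y.2.2 + x.2.2 * y.1)

/-- J₅ degenerates to J₁₉: for t ≠ 0, with A = (1/2)(e₁−e₂),
B = t·e₃, C = (t²/2)(e₁+e₂) one has A² = A, A·B = (1/2)B, B² = C + t²·A,
B·C = (t²/2)·B, C² = t²·C, A·C = 0, so as t → 0 the structure constants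
converge to those of J₁₉. -/
theorem J5_degenerates_to_J19 (t : ℝ) (ht : t ≠ 0)
    (A B C : ℝ × ℝ × ℝ)
    (hA : A = ((1 : ℝ) / 2, -(1 : ℝ) / 2, (0 : ℝ)))
    (hB : B = ((0 : ℝ), (0 : ℝ), t))
    (hC : C = (t ^ 2 / 2, t ^ 2 / 2, (0 : ℝ))) :
    LinearIndependent ℝ ![A, B, C] ∧
    mulJ5 A A = A ∧
    mulJ5 A B = (2 : ℝ)⁻¹ • B ∧
    mulJ5 B B = C + (t ^ 2) • A ∧
    mulJ5 B C = (t ^ 2 / 2) • B ∧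
    mulJ5 C C = (t ^ 2) • C ∧
    mulJ5 A C = 0 := by
  subst hA hB hC
  refine ⟨?_, ?_, ?_, ?_, ?_, ?_, ?_⟩
  · rw [Fintype.linearIndependent_iff]
    intro g hg i
    have h1 := congrArg Prod.fst hg
    have h2 := congrArg (Prod.fst ∘ Prod.snd) hg
    have h3 := congrArg (Prod.snd ∘ Prod.snd) hg
    simp [Fin.sum_univ_three, Prod.smul_def, smul_eq_mul] at h1 h2 h3
    have hg0 : g 0 = 0 := by linarith
    have hg2 : g 2 = 0 := by
      have ht2 : t ^ 2 ≠ 0 := pow_ne_zero _ ht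
      have h : g 2 * (t ^ 2 / 2) = 0 := by linarith
      rcases mul_eq_zero.mp h with h | h
      · exact h
      · exact absurd h (by positivity)
    have hg1 : g 1 = 0 := by
      rcases h3 with h | h
      · exact h
      · exact absurd h ht
    fin_cases i <;> assumption
  all_goals
    simp only [mulJ5, Prod.smul_def, Prod.mk_add_mk, Prod.ext_iff, smul_eq_mul,
      Prod.fst_add, Prod.snd_add, Prod.fst_zero, Prod.snd_zero]
    norm_num
    try ring_nf
    try constructor <;> ring
    try trivial
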